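/- Let V be a finite type with Fintype.card V = n and E : V → V → Prop a relation with no directed cycles (¬ Relation.TransGen E v v for every v). Suppose the longest directed path in (V,E) has length ℓ with ℓ ≥ 1 (there exists a directed path of length ℓ and no directed path of length ℓ+1). If E is reduced, then the number of edges of (V,E) is at most t(n−ℓ+1, 2) + T(n, ℓ, 1), where t(m, 2) is the number of edges of SimpleGraph.turanGraph m 2 and T(n, ℓ, 1) := C(n, 2) − C(n−ℓ+1, 2). -/

import Mathlib

/-- A directed path of length `k` in `(V, E)`: a map `p : Fin (k+1) → V` with
`E (p i) (p (i+1))` for all `i < k`. -/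
def IsDirPath {V : Type*} (E : V → V → Prop) (k : ℕ) (p : Fin (k + 1) → V) : Prop :=
  ∀ i : Fin k, E (p i.castSucc) (p i.succ)

/-- A directed path of length `k` from `v` to `w`. -/
def IsDirPathFromTo {V : Type*} (E : V → V → Prop) (k : ℕ) (p : Fin (k + 1) → V)
    (v w : V) : Prop :=
  p 0 = v ∧ p (Fin.last k) = w ∧ IsDirPath E k p

/-- `E` is reduced: for every pair of vertices `v, w` with `w` reachable from `v`, there is
a directed path from `v` to `w` whose vertex set contains the vertex set of every directed
path from `v` to `w`. -/
def Reduced {V : Type*} (E : V → V → Prop) : Prop :=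
  ∀ v w : V, Relation.TransGen E v w →
    ∃ (m : ℕ) (γM : Fin (m + 1) → V), IsDirPathFromTo E m γM v w ∧
      ∀ (k : ℕ) (γ : Fin (k + 1) → V), IsDirPathFromTo E k γ v w →
        Set.range γ ⊆ Set.range γM

/-- The number of edges of `(V, E)`: the cardinality of the finset of pairs `(u, v)`
with `E u v`. -/
noncomputable def edgeCount {V : Type*} [Fintype V] (E : V → V → Prop) : ℕ :=
  letI := Classical.decPred fun p : V × V => E p.1 p.2
  (Finset.univ.filter fun p : V × V => E p.1 p.2).card

/-- `t(n, r)`: the number of edges of the Turán graph `SimpleGraph.turanGraph n r`. -/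
def turanEdges (n r : ℕ) : ℕ :=
  (SimpleGraph.turanGraph n r).edgeFinset.card

/-- `T(n, ℓ, 1) = C(n, 2) - C(n - ℓ + 1, 2)` (truncated subtraction in `ℕ`). -/
def intervalTuran (n ℓ : ℕ) : ℕ := Nat.choose n 2 - Nat.choose (n - ℓ + 1) 2


namespace RedAux
open Finset

universe u

variable {V : Type*} {E : V → V → Prop}


def tval (n : ℕ) : ℕ := n / 2 * ((n + 1) / 2)

lemma tval_succ (k : ℕ) : tval (k + 1) = tval k + (k + 1) / 2 := by
  rcases Nat.even_or_odd k with ⟨j, rfl⟩ | ⟨j, rfl⟩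
  · have h1 : (j + j) / 2 = j := by omega
    have h2 : (j + j + 1) / 2 = j := by omega
    have h3 : (j + j + 1 + 1) / 2 = j + 1 := by omega
    simp only [tval, h1, h2, h3]; ring
  · have h1 : (2 * j + 1) / 2 = j := by omega
    have h2 : (2 * j + 1 + 1) / 2 = j + 1 := by omega
    have h3 : (2 * j + 1 + 1 + 1) / 2 = j + 1 := by omega
    simp only [tval, h1, h2, h3]; ring

lemma card_even_range (n : ℕ) :
    ((Finset.range n).filter (fun v => v % 2 = 0)).card = (n + 1) / 2 := by
  induction n with
  | zero => simp
  | succ n ih =>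
    rw [Finset.range_add_one, Finset.filter_insert]
    rcases Nat.even_or_odd n with ⟨j, rfl⟩ | ⟨j, rfl⟩
    · rw [if_pos (by omega)]
      rw [Finset.card_insert_of_notMem (by simp)]
      omega
    · rw [if_neg (by omega)]
      omega

lemma card_even_fin (n : ℕ) :
    ((Finset.univ : Finset (Fin n)).filter (fun v => v.val % 2 = 0)).card = (n + 1) / 2 := by
  rw [← card_even_range n]
  apply Finset.card_bij (fun v _ => v.val)
  · intro a ha
    simp only [Finset.mem_filter, Finset.mem_univ, true_and] at ha
    simp only [Finset.mem_filter, Finset.mem_range]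
    exact ⟨a.isLt, ha⟩
  · intro a _ b _ h; exact Fin.ext h
  · intro b hb; simp at hb; exact ⟨⟨b, hb.1⟩, by simp [hb.2], rfl⟩

lemma card_odd_fin (n : ℕ) :
    ((Finset.univ : Finset (Fin n)).filter (fun v => ¬ (v.val % 2 = 0))).card
      = n - (n + 1) / 2 := by
  rw [Finset.filter_not, Finset.card_sdiff_of_subset (Finset.filter_subset _ _), Finset.card_univ,
    Fintype.card_fin, card_even_fin]

lemma turanEdges_two (n : ℕ) : turanEdges n 2 = tval n := by
  classical
  have hdeg : ∀ v : Fin n, (SimpleGraph.turanGraph n 2).degree v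
      = (if v.val % 2 = 0 then n / 2 else (n + 1) / 2) := by
    intro v
    rw [SimpleGraph.degree, SimpleGraph.neighborFinset_eq_filter]
    have he : (Finset.univ.filter ((SimpleGraph.turanGraph n 2).Adj v)) =
        Finset.univ.filter (fun w : Fin n => ¬ (w.val % 2 = v.val % 2)) := by
      apply Finset.filter_congr; intro w _
      show (v : ℕ) % 2 ≠ (w : ℕ) % 2 ↔ _
      omega
    rw [he]
    have hv : v.val % 2 = 0 ∨ v.val % 2 = 1 := by omega
    rcases hv with hv | hv
    · have he2 : (Finset.univ.filter (fun w : Fin n => ¬ (w.val % 2 = v.val % 2))) =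
          Finset.univ.filter (fun w : Fin n => ¬ (w.val % 2 = 0)) := by
        apply Finset.filter_congr; intro w _; rw [hv]
      rw [he2, card_odd_fin, if_pos hv]; omega
    · have he2 : (Finset.univ.filter (fun w : Fin n => ¬ (w.val % 2 = v.val % 2))) =
          Finset.univ.filter (fun w : Fin n => w.val % 2 = 0) := by
        apply Finset.filter_congr; intro w _; rw [hv]; omega
      rw [he2, card_even_fin, if_neg (by omega)]
  have hsum := SimpleGraph.sum_degrees_eq_twice_card_edges (SimpleGraph.turanGraph n 2)
  rw [Finset.sum_congr rfl (fun v _ => hdeg v)] at hsum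
  rw [Finset.sum_ite, Finset.sum_const, Finset.sum_const, card_even_fin, card_odd_fin] at hsum
  have h2 : 2 * turanEdges n 2 = 2 * tval n := by
    show 2 * (SimpleGraph.turanGraph n 2).edgeFinset.card = _
    rw [← hsum]
    simp only [smul_eq_mul, tval]
    have hn2 : n - (n + 1) / 2 = n / 2 := by omega
    rw [hn2]; ring
  omega




lemma isDirPath_iff {k : ℕ} {p : Fin (k + 1) → V} :
    IsDirPath E k p ↔ ∀ i, (h : i < k) → E (p ⟨i, by omega⟩) (p ⟨i + 1, by omega⟩) := by
  constructor
  · intro H i h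
    have := H ⟨i, h⟩
    simpa [Fin.castSucc_mk, Fin.succ_mk] using this
  · intro H i
    have := H i.val i.isLt
    simpa [Fin.castSucc, Fin.succ, Fin.castAdd, Fin.castLE] using this

lemma isDirPath_trunc {k : ℕ} {p : Fin (k + 1) → V} (hp : IsDirPath E k p)
    {j : ℕ} (hj : j ≤ k) : IsDirPath E j (fun i : Fin (j + 1) => p ⟨i.val, by omega⟩) := by
  rw [isDirPath_iff] at hp ⊢
  intro i hi
  exact hp i (by omega)

lemma transGen_of_path {k : ℕ} {p : Fin (k + 1) → V} (hp : IsDirPath E k p)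
    {i j : ℕ} (hij : i < j) (hj : j ≤ k) :
    Relation.TransGen E (p ⟨i, by omega⟩) (p ⟨j, by omega⟩) := by
  rw [isDirPath_iff] at hp
  induction j with
  | zero => omega
  | succ j ih =>
    rcases Nat.lt_or_ge i j with h | h
    · exact (ih h (by omega)).tail (hp j (by omega))
    · have : i = j := by omega
      subst this
      exact Relation.TransGen.single (hp i (by omega))

lemma path_injective (hacyc : ∀ v : V, ¬Relation.TransGen E v v)
    {k : ℕ} {p : Fin (k + 1) → V} (hp : IsDirPath E k p) : Function.Injective p := by
  intro a b hab
  by_contra hne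
  have hne' : a.val ≠ b.val := fun h => hne (Fin.ext h)
  rcases Nat.lt_or_ge a.val b.val with h | h
  · have := transGen_of_path hp h (by omega : b.val ≤ k)
    rw [Fin.eta, Fin.eta, hab] at this
    exact hacyc _ this
  · have := transGen_of_path hp (by omega : b.val < a.val) (by omega : a.val ≤ k)
    rw [Fin.eta, Fin.eta, hab] at this
    exact hacyc _ this

lemma path_len_le {ℓ : ℕ} (hmax : ¬∃ p : Fin (ℓ + 1 + 1) → V, IsDirPath E (ℓ + 1) p)
    {k : ℕ} {p : Fin (k + 1) → V} (hp : IsDirPath E k p) : k ≤ ℓ := by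
  by_contra h
  exact hmax ⟨_, isDirPath_trunc hp (by omega : ℓ + 1 ≤ k)⟩

lemma two_path {u v w : V} (h1 : E u v) (h2 : E v w) :
    IsDirPathFromTo E 2 ![u, v, w] u w := by
  refine ⟨rfl, rfl, ?_⟩
  intro i
  fin_cases i <;> simpa

lemma transGen_two {u v w : V} (h1 : E u v) (h2 : E v w) : Relation.TransGen E u w :=
  (Relation.TransGen.single h1).tail h2




def IsSink (E : V → V → Prop) (z : V) : Prop := ∀ w, ¬ E z w
def IsSource (E : V → V → Prop) (z : V) : Prop := ∀ u, ¬ E u z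

lemma exists_sink [Fintype V] [Nonempty V] (hacyc : ∀ v : V, ¬Relation.TransGen E v v) :
    ∃ z : V, IsSink E z := by
  classical
  obtain ⟨z, _, hz⟩ := Finset.exists_min_image Finset.univ
    (fun v => (Finset.univ.filter (fun w => w = v ∨ Relation.TransGen E v w)).card)
    ⟨Classical.arbitrary V, Finset.mem_univ _⟩
  refine ⟨z, fun y hy => ?_⟩
  have hlt : (Finset.univ.filter (fun w => w = y ∨ Relation.TransGen E y w)).card
      < (Finset.univ.filter (fun w => w = z ∨ Relation.TransGen E z w)).card := by
    apply Finset.card_lt_card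
    constructor
    · intro w hw
      simp only [Finset.mem_filter, Finset.mem_univ, true_and] at hw ⊢
      rcases hw with rfl | hw
      · exact Or.inr (Relation.TransGen.single hy)
      · exact Or.inr ((Relation.TransGen.single hy).trans hw)
    · intro hsub
      have hz' : z ∈ Finset.univ.filter (fun w => w = z ∨ Relation.TransGen E z w) := by
        simp
      have := hsub hz'
      simp only [Finset.mem_filter, Finset.mem_univ, true_and] at this
      rcases this with rfl | h
      · exact hacyc z (Relation.TransGen.single hy)
      · exact hacyc z ((Relation.TransGen.single hy).trans h)
  have := hz y (Finset.mem_univ y)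
  omega

lemma exists_source [Fintype V] [Nonempty V] (hacyc : ∀ v : V, ¬Relation.TransGen E v v) :
    ∃ z : V, IsSource E z := by
  have : ∀ v : V, ¬Relation.TransGen (Function.swap E) v v := by
    intro v h
    exact hacyc v (Relation.transGen_swap.mp h)
  obtain ⟨z, hz⟩ := exists_sink (E := Function.swap E) this
  exact ⟨z, hz⟩

noncomputable def indeg [Fintype V] (E : V → V → Prop) (z : V) : ℕ :=
  letI := Classical.decPred fun u : V => E u z
  (Finset.univ.filter fun u : V => E u z).card

noncomputable def outdeg [Fintype V] (E : V → V → Prop) (z : V) : ℕ :=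
  letI := Classical.decPred fun u : V => E z u
  (Finset.univ.filter fun u : V => E z u).card

/-- interval bound: the common "out of s, into z" vertices number at most ℓ - 1. -/
lemma key [Fintype V] {ℓ : ℕ} (hacyc : ∀ v : V, ¬Relation.TransGen E v v) (hℓ : 1 ≤ ℓ)
    (hmax : ¬∃ p : Fin (ℓ + 1 + 1) → V, IsDirPath E (ℓ + 1) p) (hred : Reduced E)
    {s z : V} {F : Finset V} (hFm : ∀ a ∈ F, E s a ∧ E a z) : F.card ≤ ℓ - 1 := by
  classical
  rcases Finset.eq_empty_or_nonempty F with he | ⟨a₀, ha₀⟩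
  · simp only [he, Finset.card_empty]; omega
  obtain ⟨h1, h2⟩ := hFm a₀ ha₀
  have hsz : Relation.TransGen E s z := transGen_two h1 h2
  obtain ⟨m, γM, ⟨hγ0, hγl, hγp⟩, hdom⟩ := hred s z hsz
  set G := Finset.univ.image γM with hG
  have hGcard : G.card = m + 1 := by
    rw [hG, Finset.card_image_of_injective _ (path_injective hacyc hγp), Finset.card_univ,
      Fintype.card_fin]
  have hm : m ≤ ℓ := path_len_le hmax hγp
  have hsG : s ∈ G := by
    rw [hG]; exact Finset.mem_image.mpr ⟨0, Finset.mem_univ _, hγ0⟩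
  have hzG : z ∈ G := by
    rw [hG]; exact Finset.mem_image.mpr ⟨Fin.last m, Finset.mem_univ _, hγl⟩
  have hsz' : s ≠ z := by
    rintro rfl; exact hacyc s hsz
  have hsub : insert s (insert z F) ⊆ G := by
    intro x hx
    rcases Finset.mem_insert.mp hx with rfl | hx
    · exact hsG
    rcases Finset.mem_insert.mp hx with rfl | hx
    · exact hzG
    obtain ⟨hx1, hx2⟩ := hFm x hx
    have hpath := two_path hx1 hx2
    have := hdom 2 ![s, x, z] hpath
    have hx' : x ∈ Set.range γM := this ⟨1, rfl⟩
    obtain ⟨j, hj⟩ := hx'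
    rw [hG]
    exact Finset.mem_image.mpr ⟨j, Finset.mem_univ _, hj⟩
  have hsF : s ∉ insert z F := by
    simp only [Finset.mem_insert]
    push_neg
    refine ⟨hsz', fun hsmem => ?_⟩
    exact hacyc s (Relation.TransGen.single (hFm s hsmem).1)
  have hzF : z ∉ F := by
    intro hzmem
    exact hacyc z (Relation.TransGen.single (hFm z hzmem).2)
  have hcard := Finset.card_le_card hsub
  rw [Finset.card_insert_of_notMem hsF, Finset.card_insert_of_notMem hzF, hGcard] at hcard
  omega

lemma exists_small [Fintype V] {ℓ : ℕ} (hacyc : ∀ v : V, ¬Relation.TransGen E v v)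
    (hℓ : 1 ≤ ℓ) [Nonempty V]
    (hmax : ¬∃ p : Fin (ℓ + 1 + 1) → V, IsDirPath E (ℓ + 1) p) (hred : Reduced E)
    (hnl : ℓ + 1 ≤ Fintype.card V) :
    ∃ z : V, (IsSink E z ∨ IsSource E z) ∧
      indeg E z + outdeg E z ≤ Fintype.card V - ((Fintype.card V - ℓ + 1) + 1) / 2 := by
  classical
  obtain ⟨z, hz⟩ := exists_sink hacyc
  obtain ⟨s, hs⟩ := exists_source hacyc
  set n := Fintype.card V with hn
  set D := n - ((n - ℓ + 1) + 1) / 2 with hD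
  have houtz : outdeg E z = 0 := by
    rw [outdeg]
    convert Finset.card_empty
    apply Finset.filter_false_of_mem
    intro u _
    exact hz u
  have hins : indeg E s = 0 := by
    rw [indeg]
    convert Finset.card_empty
    apply Finset.filter_false_of_mem
    intro u _
    exact hs u
  by_cases hsez : s = z
  · -- s is isolated: both sink and source
    subst hsez
    exact ⟨s, Or.inr hs, by rw [hins, houtz]; omega⟩
  -- union bound
  have hunion : (Finset.univ.filter fun a : V => E s a).card
      + (Finset.univ.filter fun a : V => E a z).card ≤ n + (ℓ - 1) := by
    have h1 := Finset.card_union_add_card_inter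
      (Finset.univ.filter fun a : V => E s a) (Finset.univ.filter fun a : V => E a z)
    have h2 : ((Finset.univ.filter fun a : V => E s a) ∪
        (Finset.univ.filter fun a : V => E a z)).card ≤ n := by
      rw [hn]
      exact le_trans (Finset.card_le_card (Finset.subset_univ _)) (le_of_eq (Finset.card_univ))
    have h3 : ((Finset.univ.filter fun a : V => E s a) ∩
        (Finset.univ.filter fun a : V => E a z)).card ≤ ℓ - 1 := by
      apply key hacyc hℓ hmax hred (s := s) (z := z)
      intro a ha
      simp only [Finset.mem_inter, Finset.mem_filter, Finset.mem_univ, true_and] at ha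
      exact ha
    omega
  have houts : outdeg E s = (Finset.univ.filter fun a : V => E s a).card := by
    rw [outdeg]
  have hinz : indeg E z = (Finset.univ.filter fun a : V => E a z).card := by
    rw [indeg]
  by_cases hc : indeg E z ≤ D
  · exact ⟨z, Or.inl hz, by rw [houtz]; omega⟩
  · refine ⟨s, Or.inr hs, ?_⟩
    rw [hins]
    rw [houts]
    rw [hinz] at hc
    rw [hD] at hc ⊢
    omega




def ER (E : V → V → Prop) (z : V) : {x : V // x ≠ z} → {x : V // x ≠ z} → Prop :=
  fun a b => E a.1 b.1

lemma path_down {z : V} {k : ℕ} {p : Fin (k + 1) → {x : V // x ≠ z}}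
    (hp : IsDirPath (ER E z) k p) : IsDirPath E k (fun i => (p i).1) :=
  fun i => hp i

lemma pathFromTo_down {z : V} {k : ℕ} {p : Fin (k + 1) → {x : V // x ≠ z}}
    {v w : {x : V // x ≠ z}} (hp : IsDirPathFromTo (ER E z) k p v w) :
    IsDirPathFromTo E k (fun i => (p i).1) v.1 w.1 :=
  ⟨congrArg Subtype.val hp.1, congrArg Subtype.val hp.2.1, fun i => hp.2.2 i⟩

lemma transGen_down {z : V} {a b : {x : V // x ≠ z}} (h : Relation.TransGen (ER E z) a b) :
    Relation.TransGen E a.1 b.1 :=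
  by
    induction h with
    | single h => exact Relation.TransGen.single h
    | tail _ h ih => exact ih.tail h

lemma acyc_up {z : V} (hacyc : ∀ v : V, ¬Relation.TransGen E v v) :
    ∀ v : {x : V // x ≠ z}, ¬Relation.TransGen (ER E z) v v :=
  fun v h => hacyc v.1 (transGen_down h)

lemma no_long_path {z : V} {j : ℕ} (hmax : ¬∃ p : Fin (j + 1) → V, IsDirPath E j p) :
    ¬∃ p : Fin (j + 1) → {x : V // x ≠ z}, IsDirPath (ER E z) j p := by
  rintro ⟨p, hp⟩
  exact hmax ⟨_, path_down hp⟩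

lemma reduced_sink {z : V} (hz : IsSink E z) (hred : Reduced E) : Reduced (ER E z) := by
  intro v w hvw
  obtain ⟨m, γM, ⟨h0, hl, hp⟩, hdom⟩ := hred v.1 w.1 (transGen_down hvw)
  have hne : ∀ i, γM i ≠ z := by
    intro i h
    rcases Nat.lt_or_ge i.val m with hi | hi
    · have := (isDirPath_iff.mp hp) i.val hi
      rw [Fin.eta, h] at this
      exact hz _ this
    · have : i = Fin.last m := Fin.ext (by simpa using by omega : i.val = m)
      rw [this, hl] at h
      exact w.2 h
  refine ⟨m, fun i => ⟨γM i, hne i⟩, ⟨Subtype.ext h0, Subtype.ext hl, fun i => hp i⟩, ?_⟩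
  intro k γ hγ
  have hsub := hdom k _ (pathFromTo_down hγ)
  rintro x ⟨i, rfl⟩
  obtain ⟨j, hj⟩ := hsub ⟨i, rfl⟩
  exact ⟨j, Subtype.ext hj⟩

lemma reduced_source {z : V} (hz : IsSource E z) (hred : Reduced E) : Reduced (ER E z) := by
  intro v w hvw
  obtain ⟨m, γM, ⟨h0, hl, hp⟩, hdom⟩ := hred v.1 w.1 (transGen_down hvw)
  have hne : ∀ i, γM i ≠ z := by
    intro i h
    rcases Nat.eq_or_lt_of_le (Nat.zero_le i.val) with hi | hi
    · have : i = 0 := Fin.ext hi.symm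
      rw [this, h0] at h
      exact v.2 h
    · have := (isDirPath_iff.mp hp) (i.val - 1) (by omega)
      have he : (⟨i.val - 1 + 1, by omega⟩ : Fin (m + 1)) = i := Fin.ext (by simp only [Fin.val_mk]; omega)
      rw [he, h] at this
      exact hz _ this
  refine ⟨m, fun i => ⟨γM i, hne i⟩, ⟨Subtype.ext h0, Subtype.ext hl, fun i => hp i⟩, ?_⟩
  intro k γ hγ
  have hsub := hdom k _ (pathFromTo_down hγ)
  rintro x ⟨i, rfl⟩
  obtain ⟨j, hj⟩ := hsub ⟨i, rfl⟩
  exact ⟨j, Subtype.ext hj⟩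

lemma edgeCount_eq [Fintype V] (E : V → V → Prop)
    [inst : DecidablePred fun p : V × V => E p.1 p.2] :
    edgeCount E = (Finset.univ.filter fun p : V × V => E p.1 p.2).card := by
  unfold edgeCount
  congr 1
  exact Finset.filter_congr_decidable _ _ _

lemma edgeCount_split [Fintype V] [DecidableEq V] (hacyc : ∀ v : V, ¬Relation.TransGen E v v) (z : V) :
    edgeCount E = edgeCount (ER E z) + (indeg E z + outdeg E z) := by
  classical
  rw [edgeCount_eq E, edgeCount_eq (ER E z)]
  set S := (Finset.univ.filter fun p : V × V => E p.1 p.2) with hS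
  have hsplit1 := Finset.card_filter_add_card_filter_not
    (s := S) (p := fun p : V × V => p.1 = z)
  have hsplit2 := Finset.card_filter_add_card_filter_not
    (s := S.filter (fun p : V × V => ¬ p.1 = z)) (p := fun p : V × V => p.2 = z)
  have hout : (S.filter fun p : V × V => p.1 = z).card
      = outdeg E z := by
    unfold outdeg
    apply Finset.card_bij (fun p _ => p.2)
    · intro p hp
      simp only [hS, Finset.mem_filter, Finset.mem_univ, true_and] at hp ⊢
      rw [← hp.2]; exact hp.1
    · intro p hp q hq h
      simp only [hS, Finset.mem_filter, Finset.mem_univ, true_and] at hp hq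
      exact Prod.ext (hp.2.trans hq.2.symm) h
    · intro u hu
      simp only [Finset.mem_filter, Finset.mem_univ, true_and] at hu
      exact ⟨(z, u), by simp [hS, hu], rfl⟩
  have hin : ((S.filter (fun p : V × V => ¬ p.1 = z)).filter fun p : V × V => p.2 = z).card
      = indeg E z := by
    unfold indeg
    apply Finset.card_bij (fun p _ => p.1)
    · intro p hp
      simp only [hS, Finset.mem_filter, Finset.mem_univ, true_and] at hp ⊢
      rw [← hp.2]; exact hp.1.1
    · intro p hp q hq h
      simp only [hS, Finset.mem_filter, Finset.mem_univ, true_and] at hp hq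
      exact Prod.ext h (hp.2.trans hq.2.symm)
    · intro u hu
      simp only [Finset.mem_filter, Finset.mem_univ, true_and] at hu
      have hu' : u ≠ z := by
        rintro rfl
        exact hacyc u (Relation.TransGen.single hu)
      exact ⟨(u, z), by simp [hS, hu, hu'], rfl⟩
  have hrest : (Finset.univ.filter fun p : {x : V // x ≠ z} × {x : V // x ≠ z} =>
        ER E z p.1 p.2).card
      = ((S.filter (fun p : V × V => ¬ p.1 = z)).filter fun p : V × V => ¬ p.2 = z).card := by
    apply Finset.card_bij (fun p _ => ((p.1.1, p.2.1) : V × V))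
    · intro p hp
      simp only [Finset.mem_filter, Finset.mem_univ, true_and] at hp
      simp only [hS, Finset.mem_filter, Finset.mem_univ, true_and]
      exact ⟨⟨hp, p.1.2⟩, p.2.2⟩
    · intro p _ q _ h
      have h1 : p.1.1 = q.1.1 := congrArg Prod.fst h
      have h2 : p.2.1 = q.2.1 := congrArg Prod.snd h
      exact Prod.ext (Subtype.ext h1) (Subtype.ext h2)
    · intro p hp
      simp only [hS, Finset.mem_filter, Finset.mem_univ, true_and] at hp
      refine ⟨(⟨p.1, hp.1.2⟩, ⟨p.2, hp.2⟩), ?_, rfl⟩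
      simp only [Finset.mem_filter, Finset.mem_univ, true_and]
      exact hp.1.1
  rw [hrest, ← hout, ← hin]
  omega





lemma isDirPath_shift {k : ℕ} {p : Fin (k + 1 + 1) → V} (hp : IsDirPath E (k + 1) p) :
    IsDirPath E k (fun i : Fin (k + 1) => p ⟨i.val + 1, by omega⟩) := by
  rw [isDirPath_iff] at hp ⊢
  intro i hi
  exact hp (i + 1) (by omega)

lemma choose_two_succ (n : ℕ) : (n + 1).choose 2 = n.choose 2 + n := by
  rw [Nat.choose_succ_succ, Nat.choose_one_right, Nat.add_comm]

lemma tval_sq (n : ℕ) : tval n = n * n / 4 := by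
  rcases Nat.even_or_odd n with ⟨j, rfl⟩ | ⟨j, rfl⟩
  · have h1 : (j + j) / 2 = j := by omega
    have h2 : (j + j + 1) / 2 = j := by omega
    have h3 : (j + j) * (j + j) = j * j * 4 := by ring
    rw [tval, h1, h2, h3, Nat.mul_div_cancel _ (by norm_num)]
  · have h1 : (2 * j + 1) / 2 = j := by omega
    have h2 : (2 * j + 1 + 1) / 2 = j + 1 := by omega
    have h3 : (2 * j + 1) * (2 * j + 1) = j * (j + 1) * 4 + 1 := by ring
    have h4 : ∀ x : ℕ, (x * 4 + 1) / 4 = x := fun x => by omega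
    rw [tval, h1, h2, h3, h4]

theorem aux : ∀ (N : ℕ) (V : Type u) [Fintype V] (E : V → V → Prop) (ℓ : ℕ),
    Fintype.card V = N → (∀ v : V, ¬Relation.TransGen E v v) → 1 ≤ ℓ →
    (∃ p : Fin (ℓ + 1) → V, IsDirPath E ℓ p) →
    (¬∃ p : Fin (ℓ + 1 + 1) → V, IsDirPath E (ℓ + 1) p) →
    Reduced E →
    edgeCount E ≤ tval (N - ℓ + 1) + (N.choose 2 - (N - ℓ + 1).choose 2) := by
  intro N
  induction N using Nat.strong_induction_on with
  | _ N IH =>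
  intro V _ E ℓ hcard hacyc hℓ hlong hmax hred
  classical
  obtain ⟨p0, hp0⟩ := hlong
  have hinj := path_injective hacyc hp0
  have hNℓ : ℓ + 1 ≤ N := by
    rw [← hcard]
    simpa using Fintype.card_le_of_injective p0 hinj
  haveI hne : Nonempty V := ⟨p0 0⟩
  rcases Nat.lt_or_ge ℓ 2 with hℓ2 | hℓ2
  · -- base case ℓ = 1
    have hℓ1 : ℓ = 1 := by omega
    subst hℓ1
    set A := Finset.univ.filter (fun v : V => ∃ w, E v w) with hA
    have hsub : (Finset.univ.filter fun p : V × V => E p.1 p.2) ⊆ A ×ˢ (Finset.univ \ A) := by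
      intro q hq
      simp only [Finset.mem_filter, Finset.mem_univ, true_and] at hq
      rw [Finset.mem_product]
      refine ⟨?_, ?_⟩
      · simp only [hA, Finset.mem_filter, Finset.mem_univ, true_and]
        exact ⟨q.2, hq⟩
      · simp only [Finset.mem_sdiff, Finset.mem_univ, true_and, hA, Finset.mem_filter]
        push_neg
        intro w hw
        exact hmax ⟨![q.1, q.2, w], (two_path hq hw).2.2⟩
    have hEC : edgeCount E ≤ A.card * (N - A.card) := by
      rw [edgeCount_eq E]
      calc (Finset.univ.filter fun p : V × V => E p.1 p.2).card
          ≤ (A ×ˢ (Finset.univ \ A)).card := Finset.card_le_card hsub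
        _ = A.card * (N - A.card) := by
            rw [Finset.card_product, Finset.card_sdiff_of_subset (Finset.subset_univ A),
              Finset.card_univ, hcard]
    have haN : A.card ≤ N := by
      rw [← hcard]
      exact le_trans (Finset.card_le_card (Finset.subset_univ A)) (le_of_eq Finset.card_univ)
    have hgen : ∀ a b : ℕ, a * b * 4 ≤ (a + b) * (a + b) := by
      intro a b
      rcases le_total a b with h | h
      · obtain ⟨c, rfl⟩ := Nat.exists_eq_add_of_le h
        nlinarith
      · obtain ⟨c, rfl⟩ := Nat.exists_eq_add_of_le h
        nlinarith
    have hle : A.card * (N - A.card) ≤ tval N := by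
      rw [tval_sq, Nat.le_div_iff_mul_le (by norm_num)]
      have h := hgen A.card (N - A.card)
      have hab : A.card + (N - A.card) = N := by omega
      rw [hab] at h
      exact h
    have hN1 : N - 1 + 1 = N := by omega
    rw [hN1]
    omega
  · -- inductive case ℓ ≥ 2
    obtain ⟨z, hzs, hdeg⟩ := exists_small hacyc hℓ hmax hred (hcard ▸ hNℓ)
    rw [hcard] at hdeg
    have hsplit := edgeCount_split hacyc z
    have hcard' : Fintype.card {x : V // x ≠ z} = N - 1 := by
      have h1 := Fintype.card_subtype_compl (fun x : V => x = z)
      rw [Fintype.card_subtype_eq, hcard] at h1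
      exact h1
    have hacyc' := acyc_up (z := z) (E := E) hacyc
    have hmax' := no_long_path (z := z) (j := ℓ + 1) hmax
    -- numbers
    obtain ⟨r, hr⟩ : ∃ r, N = ℓ + r ∧ 1 ≤ r := ⟨N - ℓ, by omega⟩
    have hred' : Reduced (ER E z) := by
      rcases hzs with hsink | hsource
      · exact reduced_sink hsink hred
      · exact reduced_source hsource hred
    by_cases hz2 : ∃ q : Fin (ℓ + 1) → {x : V // x ≠ z}, IsDirPath (ER E z) ℓ q
    · -- longest path still ℓ after deletion
      have hIH := IH (N - 1) (by omega) _ (ER E z) ℓ hcard' hacyc' hℓ hz2 hmax' hred'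
      have e1 : N - 1 - ℓ + 1 = r := by omega
      have e2 : N - ℓ + 1 = r + 1 := by omega
      rw [e1] at hIH
      rw [e2]
      have e3 : N - 1 + 1 = N := by omega
      have hcc : N.choose 2 = (N - 1).choose 2 + (N - 1) := by
        conv_lhs => rw [← e3]
        rw [choose_two_succ]
      have hcc2 : (r + 1).choose 2 = r.choose 2 + r := choose_two_succ r
      have hmono : r.choose 2 ≤ (N - 1).choose 2 := Nat.choose_le_choose 2 (by omega)
      have htv : tval (r + 1) = tval r + (r + 1) / 2 := tval_succ r
      omega
    · -- longest path dropped to ℓ - 1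
      obtain ⟨k, rfl⟩ : ∃ k, ℓ = k + 1 := ⟨ℓ - 1, by omega⟩
      have hk1 : 1 ≤ k := by omega
      -- z is on the long path p0, at an end
      have hzp : ∃ i0, p0 i0 = z := by
        by_contra hzr
        push_neg at hzr
        exact hz2 ⟨fun i => ⟨p0 i, hzr i⟩, fun i => hp0 i⟩
      obtain ⟨i0, hi0⟩ := hzp
      have hq : ∃ q : Fin (k + 1) → {x : V // x ≠ z}, IsDirPath (ER E z) k q := by
        rcases hzs with hsink | hsource
        · -- z is a sink, so i0 is the last index; use the first k+1 vertices
          have hi0l : i0.val = k + 1 := by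
            by_contra hne'
            have hlt : i0.val < k + 1 := by omega
            have := isDirPath_iff.mp hp0 i0.val hlt
            rw [Fin.eta, hi0] at this
            exact hsink _ this
          have htr := isDirPath_trunc hp0 (by omega : k ≤ k + 1)
          refine ⟨fun i => ⟨p0 ⟨i.val, by omega⟩, ?_⟩, fun i => htr i⟩
          intro h
          rw [← hi0] at h
          have := hinj h
          have : i.val = i0.val := congrArg Fin.val this
          omega
        · -- z is a source, so i0 is the first index; use the last k+1 vertices
          have hi00 : i0.val = 0 := by
            by_contra hne'
            have := isDirPath_iff.mp hp0 (i0.val - 1) (by omega)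
            have he : (⟨i0.val - 1 + 1, by omega⟩ : Fin (k + 1 + 1)) = i0 :=
              Fin.ext (by simp only [Fin.val_mk]; omega)
            rw [he, hi0] at this
            exact hsource _ this
          have htr := isDirPath_shift hp0
          refine ⟨fun i => ⟨p0 ⟨i.val + 1, by omega⟩, ?_⟩, fun i => htr i⟩
          intro h
          rw [← hi0] at h
          have := hinj h
          have : i.val + 1 = i0.val := congrArg Fin.val this
          omega
      have hIH := IH (N - 1) (by omega) _ (ER E z) k hcard' hacyc' hk1 hq hz2 hred'
      have e1 : N - 1 - k + 1 = r + 1 := by omega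
      have e2 : N - (k + 1) + 1 = r + 1 := by omega
      rw [e1] at hIH
      rw [e2]
      have e3 : N - 1 + 1 = N := by omega
      have hcc : N.choose 2 = (N - 1).choose 2 + (N - 1) := by
        conv_lhs => rw [← e3]
        rw [choose_two_succ]
      have hmono : (r + 1).choose 2 ≤ (N - 1).choose 2 := Nat.choose_le_choose 2 (by omega)
      omega

end RedAux

theorem reduced_edge_bound {V : Type*} [Fintype V] (E : V → V → Prop) (n ℓ : ℕ)
    (hcard : Fintype.card V = n)
    (hacyc : ∀ v : V, ¬Relation.TransGen E v v)
    (hℓ : 1 ≤ ℓ)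
    (hlong : ∃ p : Fin (ℓ + 1) → V, IsDirPath E ℓ p)
    (hmax : ¬∃ p : Fin (ℓ + 1 + 1) → V, IsDirPath E (ℓ + 1) p)
    (hred : Reduced E) :
    edgeCount E ≤ turanEdges (n - ℓ + 1) 2 + intervalTuran n ℓ := by
  have h := RedAux.aux n V E ℓ hcard hacyc hℓ hlong hmax hred
  unfold intervalTuran
  rw [RedAux.turanEdges_two]
  exact h
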